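/- Let Q be defined by the Bellman equation Q^π = r + γ P^π Q^π for a Markov transition operator P^π and discount γ ∈ (0,1), and let Q̃^π be the fixed point of the projected Bellman equation Q̃^π = Π(r + γ P^π Q̃^π), where Π is the orthogonal projection in L²(ν) onto a closed subspace and ν is the stationary distribution of π. If P^π is a nonexpansion in L²(ν) (true when ν is stationary), then ‖Q^π - Q̃^π‖_ν ≤ (1/(1-γ)) ‖Q^π - Π Q^π‖_ν. -/
import Mathlib

/-- projected Bellman equation approximation bound
(Tsitsiklis–Van Roy / Yu–Bertsekas): `‖Q - Q̃‖ ≤ (1/(1-γ)) ‖Q - Π Q‖` in `L²(ν)`. -/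
theorem stmt_9 {V : Type*} [NormedAddCommGroup V] [NormedSpace ℝ V]
    (γ : ℝ) (hγ : γ ∈ Set.Ioo (0 : ℝ) 1)
    (P Pi : V →ₗ[ℝ] V)
    (hPnonexp : ∀ f : V, ‖P f‖ ≤ ‖f‖)
    (hPinonexp : ∀ f : V, ‖Pi f‖ ≤ ‖f‖)
    (r Q Qtil : V)
    (hQ : Q = r + γ • P Q)
    (hQtil : Qtil = Pi (r + γ • P Qtil)) :
    ‖Q - Qtil‖ ≤ (1 / (1 - γ)) * ‖Q - Pi Q‖ := by
  obtain ⟨hγ0, hγ1⟩ := hγ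
  have key : Pi Q - Qtil = Pi (γ • P (Q - Qtil)) := by
    conv_lhs => rw [hQtil, ← map_sub]
    congr 1
    rw [map_sub, smul_sub]
    nth_rewrite 1 [hQ]
    abel
  have h1 : ‖Pi Q - Qtil‖ ≤ γ * ‖Q - Qtil‖ := by
    rw [key]
    calc ‖Pi (γ • P (Q - Qtil))‖ ≤ ‖γ • P (Q - Qtil)‖ := hPinonexp _
      _ = γ * ‖P (Q - Qtil)‖ := by rw [norm_smul, Real.norm_eq_abs, abs_of_pos hγ0]
      _ ≤ γ * ‖Q - Qtil‖ := by
          exact mul_le_mul_of_nonneg_left (hPnonexp _) hγ0.le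
  have h2 : ‖Q - Qtil‖ ≤ ‖Q - Pi Q‖ + γ * ‖Q - Qtil‖ := by
    calc ‖Q - Qtil‖ = ‖(Q - Pi Q) + (Pi Q - Qtil)‖ := by abel_nf
      _ ≤ ‖Q - Pi Q‖ + ‖Pi Q - Qtil‖ := norm_add_le _ _
      _ ≤ _ := by linarith
  rw [div_mul_eq_mul_div, one_mul, le_div_iff₀ (by linarith)]
  nlinarith [norm_nonneg (Q - Qtil)]
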